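/- Let T > 0, δ ∈ (0,T), and let (X(t))_{t∈[δ,T]} be a family of centered square-integrable real random variables on a probability space with standard deviation function σ(t) = (E[X(t)²])^{1/2} satisfying σ(t) ≥ m for all t ∈ [δ,T], for some m > 0. Suppose E[(X(t)−X(s))²] ≤ C|t−s|^{γ} for all s,t ∈ [δ,T], for some constants C > 0 and γ > 0. Fix ε ∈ (0,1) and let σ̃ = σ(T). Define Y(t) = (X(t)/σ(t))·(1 − (1−ε)(σ̃ − σ(t))/σ̃) for t ∈ [δ,T]. Then for all s,t ∈ [δ,T]: E[(Y(t)−Y(s))²] ≤ (2ε²/m² + 2(1−ε)²/σ̃²)·C·|t−s|^{γ}. -/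

import Mathlib

open MeasureTheory Set

/-- Hölder-type bound for the increments of the transformed process
`Y(t) = (X(t)/σ(t)) (1 - (1-ε)(σ(T) - σ(t))/σ(T))`. -/
private lemma sq_add_le (x y : ℝ) : (x + y) ^ 2 ≤ 2 * x ^ 2 + 2 * y ^ 2 := by
  nlinarith [sq_nonneg (x - y)]

set_option maxHeartbeats 1000000 in
theorem stmt12 {Ω : Type*} [MeasurableSpace Ω] (P : Measure Ω) [IsProbabilityMeasure P]
    (T δ : ℝ) (hδ : 0 < δ) (hδT : δ < T)
    (X : ℝ → Ω → ℝ) (m C γ ε : ℝ) (hm : 0 < m) (hC : 0 < C) (hγ : 0 < γ)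
    (hε : ε ∈ Set.Ioo (0:ℝ) 1)
    (hL2 : ∀ t ∈ Set.Icc δ T, MemLp (X t) 2 P)
    (hcent : ∀ t ∈ Set.Icc δ T, ∫ ω, X t ω ∂P = 0)
    (σ : ℝ → ℝ) (hσ : ∀ t, σ t = Real.sqrt (∫ ω, X t ω ^ 2 ∂P))
    (hσm : ∀ t ∈ Set.Icc δ T, m ≤ σ t)
    (hinc : ∀ s ∈ Set.Icc δ T, ∀ t ∈ Set.Icc δ T,
      ∫ ω, (X t ω - X s ω) ^ 2 ∂P ≤ C * |t - s| ^ γ)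
    (Y : ℝ → Ω → ℝ)
    (hY : ∀ t ω, Y t ω = (X t ω / σ t) * (1 - (1 - ε) * (σ T - σ t) / σ T)) :
    ∀ s ∈ Set.Icc δ T, ∀ t ∈ Set.Icc δ T,
      ∫ ω, (Y t ω - Y s ω) ^ 2 ∂P ≤
        (2 * ε ^ 2 / m ^ 2 + 2 * (1 - ε) ^ 2 / (σ T) ^ 2) * C * |t - s| ^ γ := by
  intro s hs t ht
  have hTmem : T ∈ Set.Icc δ T := ⟨hδT.le, le_refl T⟩
  have hma : m ≤ σ t := hσm t ht
  have hmb : m ≤ σ s := hσm s hs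
  have hmT : m ≤ σ T := hσm T hTmem
  have hapos : 0 < σ t := lt_of_lt_of_le hm hma
  have hbpos : 0 < σ s := lt_of_lt_of_le hm hmb
  have hTpos : 0 < σ T := lt_of_lt_of_le hm hmT
  have hane : σ t ≠ 0 := hapos.ne'
  have hbne : σ s ≠ 0 := hbpos.ne'
  have hTne : σ T ≠ 0 := hTpos.ne'
  have hmne : m ≠ 0 := hm.ne'
  have hsqa : σ t ^ 2 = ∫ ω, X t ω ^ 2 ∂P := by
    rw [hσ]; exact Real.sq_sqrt (integral_nonneg fun ω => sq_nonneg _)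
  have hsqb : σ s ^ 2 = ∫ ω, X s ω ^ 2 ∂P := by
    rw [hσ]; exact Real.sq_sqrt (integral_nonneg fun ω => sq_nonneg _)
  -- integrability facts
  have hXt2 : Integrable (fun ω => X t ω ^ 2) P := (hL2 t ht).integrable_sq
  have hXs2 : Integrable (fun ω => X s ω ^ 2) P := (hL2 s hs).integrable_sq
  have hDint : Integrable (fun ω => (X t ω - X s ω) ^ 2) P :=
    ((hL2 t ht).sub (hL2 s hs)).integrable_sq
  have hu : MemLp (fun ω => 1 / σ t * X t ω - 1 / σ s * X s ω) 2 P :=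
    ((hL2 t ht).const_mul (1 / σ t)).sub ((hL2 s hs).const_mul (1 / σ s))
  have hu2 : Integrable (fun ω => (X t ω / σ t - X s ω / σ s) ^ 2) P := by
    have h2 := hu.integrable_sq
    have heq : (fun ω => (1 / σ t * X t ω - 1 / σ s * X s ω) ^ 2)
        = fun ω => (X t ω / σ t - X s ω / σ s) ^ 2 := by
      funext ω; rw [one_div_mul_eq_div, one_div_mul_eq_div]
    rwa [heq] at h2
  set D := ∫ ω, (X t ω - X s ω) ^ 2 ∂P with hD
  have hD0 : 0 ≤ D := integral_nonneg fun ω => sq_nonneg _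
  have hDK : D ≤ C * |t - s| ^ γ := hinc s hs t ht
  have hK0 : 0 ≤ C * |t - s| ^ γ := le_trans hD0 hDK
  -- the integral of the standardized increment
  have hpt : ∀ ω, (X t ω / σ t - X s ω / σ s) ^ 2
      = 1 / (σ t * σ s) * (X t ω - X s ω) ^ 2
        - (σ t - σ s) / (σ t * σ s) * (1 / σ t * X t ω ^ 2 - 1 / σ s * X s ω ^ 2) := by
    intro ω; field_simp; ring
  have hint : ∫ ω, (X t ω / σ t - X s ω / σ s) ^ 2 ∂P
      = 1 / (σ t * σ s) * D
        - (σ t - σ s) / (σ t * σ s)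
          * (1 / σ t * (∫ ω, X t ω ^ 2 ∂P) - 1 / σ s * (∫ ω, X s ω ^ 2 ∂P)) := by
    have hI1 : Integrable (fun ω => 1 / (σ t * σ s) * (X t ω - X s ω) ^ 2) P :=
      hDint.const_mul _
    have hI2 : Integrable (fun ω => 1 / σ t * X t ω ^ 2 - 1 / σ s * X s ω ^ 2) P :=
      (hXt2.const_mul _).sub (hXs2.const_mul _)
    have hI3 : Integrable
        (fun ω => (σ t - σ s) / (σ t * σ s) * (1 / σ t * X t ω ^ 2 - 1 / σ s * X s ω ^ 2)) P :=
      hI2.const_mul _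
    simp_rw [hpt]
    rw [integral_sub hI1 hI3, integral_const_mul, integral_const_mul,
      integral_sub (hXt2.const_mul _) (hXs2.const_mul _),
      integral_const_mul, integral_const_mul]
  have huD : ∫ ω, (X t ω / σ t - X s ω / σ s) ^ 2 ∂P ≤ D / m ^ 2 := by
    rw [hint, ← hsqa, ← hsqb]
    have h1 : 1 / σ t * σ t ^ 2 = σ t := by field_simp
    have h2 : 1 / σ s * σ s ^ 2 = σ s := by field_simp
    rw [h1, h2]
    have hab : m ^ 2 ≤ σ t * σ s := by
      have := mul_le_mul hma hmb hm.le hapos.le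
      nlinarith
    have habpos : 0 < σ t * σ s := mul_pos hapos hbpos
    have hstep1 : 1 / (σ t * σ s) * D - (σ t - σ s) / (σ t * σ s) * (σ t - σ s)
        ≤ D / (σ t * σ s) := by
      have hnn : 0 ≤ (σ t - σ s) / (σ t * σ s) * (σ t - σ s) := by
        rw [div_mul_eq_mul_div]
        exact div_nonneg (by nlinarith [sq_nonneg (σ t - σ s)]) habpos.le
      have : 1 / (σ t * σ s) * D = D / (σ t * σ s) := by ring
      linarith
    have hstep2 : D / (σ t * σ s) ≤ D / m ^ 2 := by
      have hmsq : (0:ℝ) < m ^ 2 := pow_pos hm 2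
      gcongr
    linarith
  -- pointwise decomposition of the increment of Y
  have hYdiff : ∀ ω, Y t ω - Y s ω
      = ε * (X t ω / σ t - X s ω / σ s) + (1 - ε) / σ T * (X t ω - X s ω) := by
    intro ω; rw [hY, hY]; field_simp; ring
  have hsq : ∀ ω, (Y t ω - Y s ω) ^ 2
      ≤ 2 * ε ^ 2 * (X t ω / σ t - X s ω / σ s) ^ 2
        + 2 * ((1 - ε) / σ T) ^ 2 * (X t ω - X s ω) ^ 2 := by
    intro ω
    rw [hYdiff ω]
    calc (ε * (X t ω / σ t - X s ω / σ s) + (1 - ε) / σ T * (X t ω - X s ω)) ^ 2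
        ≤ 2 * (ε * (X t ω / σ t - X s ω / σ s)) ^ 2
          + 2 * ((1 - ε) / σ T * (X t ω - X s ω)) ^ 2 :=
          sq_add_le _ _
      _ = 2 * ε ^ 2 * (X t ω / σ t - X s ω / σ s) ^ 2
          + 2 * ((1 - ε) / σ T) ^ 2 * (X t ω - X s ω) ^ 2 := by ring
  have hmono : ∫ ω, (Y t ω - Y s ω) ^ 2 ∂P
      ≤ ∫ ω, (2 * ε ^ 2 * (X t ω / σ t - X s ω / σ s) ^ 2
        + 2 * ((1 - ε) / σ T) ^ 2 * (X t ω - X s ω) ^ 2) ∂P := by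
    refine integral_mono_of_nonneg (Filter.Eventually.of_forall fun ω => sq_nonneg _)
      ((hu2.const_mul _).add (hDint.const_mul _))
      (Filter.Eventually.of_forall hsq)
  have hsplit : ∫ ω, (2 * ε ^ 2 * (X t ω / σ t - X s ω / σ s) ^ 2
        + 2 * ((1 - ε) / σ T) ^ 2 * (X t ω - X s ω) ^ 2) ∂P
      = 2 * ε ^ 2 * (∫ ω, (X t ω / σ t - X s ω / σ s) ^ 2 ∂P)
        + 2 * ((1 - ε) / σ T) ^ 2 * D := by
    rw [integral_add (hu2.const_mul _) (hDint.const_mul _),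
      integral_const_mul, integral_const_mul]
  have hfin : 2 * ε ^ 2 * (∫ ω, (X t ω / σ t - X s ω / σ s) ^ 2 ∂P)
        + 2 * ((1 - ε) / σ T) ^ 2 * D
      ≤ (2 * ε ^ 2 / m ^ 2 + 2 * (1 - ε) ^ 2 / σ T ^ 2) * C * |t - s| ^ γ := by
    have hε2 : (0:ℝ) ≤ 2 * ε ^ 2 := by positivity
    have hc2 : (0:ℝ) ≤ 2 * ((1 - ε) / σ T) ^ 2 := by positivity
    calc 2 * ε ^ 2 * (∫ ω, (X t ω / σ t - X s ω / σ s) ^ 2 ∂P)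
          + 2 * ((1 - ε) / σ T) ^ 2 * D
        ≤ 2 * ε ^ 2 * (D / m ^ 2) + 2 * ((1 - ε) / σ T) ^ 2 * D := by
          have := mul_le_mul_of_nonneg_left huD hε2
          linarith
      _ ≤ 2 * ε ^ 2 * ((C * |t - s| ^ γ) / m ^ 2)
          + 2 * ((1 - ε) / σ T) ^ 2 * (C * |t - s| ^ γ) := by
          gcongr
      _ = (2 * ε ^ 2 / m ^ 2 + 2 * (1 - ε) ^ 2 / σ T ^ 2) * C * |t - s| ^ γ := by
          field_simp
  calc ∫ ω, (Y t ω - Y s ω) ^ 2 ∂P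
      ≤ 2 * ε ^ 2 * (∫ ω, (X t ω / σ t - X s ω / σ s) ^ 2 ∂P)
        + 2 * ((1 - ε) / σ T) ^ 2 * D := by rw [← hsplit]; exact hmono
    _ ≤ (2 * ε ^ 2 / m ^ 2 + 2 * (1 - ε) ^ 2 / σ T ^ 2) * C * |t - s| ^ γ := hfin
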